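/- Let V₁ be a topological vector space containing a nonempty bounded open subset, and V₂ any topological vector space over the same field. Then every bounded linear map from V₁ to V₂ is continuous. -/

import Mathlib

open Pointwise Filter Topology

theorem bounded_linear_continuous_of_bounded_open_exists
    {V₁ V₂ : Type*} [AddCommGroup V₁] [Module ℝ V₁] [TopologicalSpace V₁]
    [ContinuousAdd V₁] [ContinuousSMul ℝ V₁]
    [AddCommGroup V₂] [Module ℝ V₂] [TopologicalSpace V₂]
    [ContinuousAdd V₂] [ContinuousSMul ℝ V₂]
    (U₀ : Set V₁) (hU₀open : IsOpen U₀) (hU₀ne : U₀.Nonempty)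
    (hU₀bdd : ∀ W : Set V₁, IsOpen W → (0 : V₁) ∈ W → ∃ t > (0 : ℝ), U₀ ⊆ t • W)
    (f : V₁ →ₗ[ℝ] V₂)
    (hf : ∀ E : Set V₁,
      (∀ U : Set V₁, IsOpen U → (0 : V₁) ∈ U → ∃ t > (0 : ℝ), E ⊆ t • U) →
      (∀ U : Set V₂, IsOpen U → (0 : V₂) ∈ U → ∃ t > (0 : ℝ), f '' E ⊆ t • U)) :
    Continuous f := by
  haveI : IsTopologicalAddGroup V₁ :=
    { continuous_neg := by
        simpa [neg_one_smul] using (continuous_const_smul (-1 : ℝ) : Continuous fun x : V₁ => (-1:ℝ) • x) }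
  haveI : IsTopologicalAddGroup V₂ :=
    { continuous_neg := by
        simpa [neg_one_smul] using (continuous_const_smul (-1 : ℝ) : Continuous fun x : V₂ => (-1:ℝ) • x) }
  obtain ⟨x₀, hx₀⟩ := hU₀ne
  apply continuous_of_continuousAt_zero f.toAddMonoidHom
  rw [ContinuousAt]
  simp only [LinearMap.toAddMonoidHom_coe, map_zero]
  intro N hN
  rw [Filter.mem_map]
  -- half neighborhood
  obtain ⟨W, hW, hWN⟩ := exists_nhds_zero_half hN
  -- balanced neighborhood inside W
  obtain ⟨V, ⟨hVmem, hVbal⟩, hVW⟩ := (nhds_basis_balanced ℝ V₂).mem_iff.mp hW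
  have h0V : (0 : V₂) ∈ interior V := mem_interior_iff_mem_nhds.mpr hVmem
  obtain ⟨t, ht, htsub⟩ := hf U₀ hU₀bdd (interior V) isOpen_interior h0V
  have htsub' : f '' U₀ ⊆ t • V := htsub.trans (Set.smul_set_mono interior_subset)
  -- find ε
  have hten : Tendsto (fun c : ℝ => c • (-f x₀)) (𝓝 0) (𝓝 0) := by
    simpa using (tendsto_id.smul_const (-f x₀) : Tendsto (fun c : ℝ => c • (-f x₀)) (𝓝 0) (𝓝 ((0:ℝ) • (-f x₀))))
  have hpre : {c : ℝ | c • (-f x₀) ∈ V} ∈ 𝓝 (0:ℝ) := hten hVmem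
  obtain ⟨δ, hδ, hball⟩ := Metric.mem_nhds_iff.mp hpre
  set ε : ℝ := min (δ / 2) (1 / t) with hε
  have hεpos : 0 < ε := lt_min (by linarith) (by positivity)
  have hεne : ε ≠ 0 := ne_of_gt hεpos
  have hεδ : ε < δ := lt_of_le_of_lt (min_le_left _ _) (by linarith)
  have hεV : ε • (-f x₀) ∈ V := hball (by simpa [abs_of_pos hεpos] using hεδ)
  have hεt : ε * t ≤ 1 := by
    have : ε ≤ 1 / t := min_le_right _ _
    rw [le_div_iff₀ ht] at this
    linarith
  -- the neighborhood in V₁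
  have hSopen : IsOpen (ε • U₀ + {-(ε • x₀)}) := by
    apply IsOpen.add_right
    exact hU₀open.smul₀ hεne
  have h0S : (0 : V₁) ∈ ε • U₀ + {-(ε • x₀)} := by
    refine ⟨ε • x₀, Set.smul_mem_smul_set hx₀, -(ε • x₀), rfl, by simp⟩
  refine Filter.mem_of_superset (hSopen.mem_nhds h0S) ?_
  rintro _ ⟨_, ⟨v, hv, rfl⟩, _, rfl, rfl⟩
  simp only [Set.mem_preimage, map_add, map_smul, map_neg]
  have h1 : ε • f v ∈ V := by
    obtain ⟨w, hw, hweq⟩ := htsub' ⟨v, hv, rfl⟩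
    have : ε • f v = (ε * t) • w := by rw [← hweq, smul_smul]
    rw [this]
    exact hVbal (ε * t) (by rw [Real.norm_eq_abs, abs_of_pos (by positivity)]; exact hεt) (Set.smul_mem_smul_set hw)
  have h2 : -(ε • f x₀) = ε • (-f x₀) := by rw [smul_neg]
  apply hWN _ (hVW h1) _ (hVW (h2 ▸ hεV))
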